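/- Let B be a Bernoulli random variable with P(B=1) = q, and let Z ∈ [0,1] be a random variable with E[Z] = r ∈ (0,1) and E[Z | B = 1] = s. Let Z̃ be a Bernoulli variable with P(Z̃ = 1 | Z) = Z (drawn independently given Z). Then q^2 · KL(s, r) ≤ q · I(B; Z̃) ≤ q · I(B; Z), where KL is Bernoulli KL divergence and I is mutual information. -/

import Mathlib

attribute [local instance] Classical.propDecidable

/-- Probability of an event on a finite sample space with weight function `μ`. -/
noncomputable def pr {Ω : Type*} [Fintype Ω] (μ : Ω → ℝ) (E : Ω → Prop) : ℝ :=
  ∑ ω, if E ω then μ ω else 0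

/-- Shannon mutual information (natural logarithm) between the discrete random
variables `X` and `Y` on a finite sample space, with the convention `0 · log 0 = 0`. -/
noncomputable def mutInfo {Ω S T : Type*} [Fintype Ω]
    (μ : Ω → ℝ) (X : Ω → S) (Y : Ω → T) : ℝ :=
  ∑ x ∈ Finset.univ.image X, ∑ y ∈ Finset.univ.image Y,
    pr μ (fun ω => X ω = x ∧ Y ω = y) *
      Real.log (pr μ (fun ω => X ω = x ∧ Y ω = y) /
        (pr μ (fun ω => X ω = x) * pr μ (fun ω => Y ω = y)))


/-- Bernoulli Kullback–Leibler divergence. -/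
noncomputable def klBer (p q : ℝ) : ℝ :=
  p * Real.log (p / q) + (1 - p) * Real.log ((1 - p) / (1 - q))

/-- The log-sum inequality. -/
lemma logSum {ι : Type*} (s : Finset ι) (a c : ι → ℝ)
    (ha : ∀ i ∈ s, 0 ≤ a i) (hc : ∀ i ∈ s, 0 ≤ c i)
    (h0 : ∀ i ∈ s, c i = 0 → a i = 0) :
    (∑ i ∈ s, a i) * Real.log ((∑ i ∈ s, a i) / (∑ i ∈ s, c i)) ≤
      ∑ i ∈ s, a i * Real.log (a i / c i) := by
  set A := ∑ i ∈ s, a i with hA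
  set C := ∑ i ∈ s, c i with hC
  rcases eq_or_lt_of_le (Finset.sum_nonneg ha) with h | hApos
  · have hz : ∀ i ∈ s, a i = 0 := (Finset.sum_eq_zero_iff_of_nonneg ha).mp h.symm
    have : ∑ i ∈ s, a i * Real.log (a i / c i) = 0 :=
      Finset.sum_eq_zero fun i hi => by rw [hz i hi]; ring
    rw [this, hA, ← h]; simp
  · have hCpos : 0 < C := by
      rcases eq_or_lt_of_le (Finset.sum_nonneg hc) with h | h
      · exfalso
        have hcz : ∀ i ∈ s, c i = 0 := (Finset.sum_eq_zero_iff_of_nonneg hc).mp h.symm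
        have : A = 0 := Finset.sum_eq_zero fun i hi => h0 i hi (hcz i hi)
        linarith
      · exact h
    have key : ∀ i ∈ s, a i * Real.log (A / C) + (a i - c i * (A / C)) ≤
        a i * Real.log (a i / c i) := by
      intro i hi
      rcases eq_or_lt_of_le (ha i hi) with h | hai
      · rw [← h]
        have : 0 ≤ c i * (A / C) := by
          have := hc i hi; positivity
        simp only [zero_mul, zero_sub, zero_add]
        linarith
      · have hci : 0 < c i :=
          lt_of_le_of_ne (hc i hi) fun h' => by
            have := h0 i hi h'.symm; linarith
        have ht : 0 < (c i * A) / (a i * C) := by positivity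
        have hACpos : 0 < A / C := div_pos hApos hCpos
        have hlog : Real.log ((c i * A) / (a i * C)) ≤ (c i * A) / (a i * C) - 1 :=
          Real.log_le_sub_one_of_pos ht
        have hsplit : Real.log (a i / c i) = Real.log (A / C) - Real.log ((c i * A) / (a i * C)) := by
          have heq : a i / c i = (A / C) / ((c i * A) / (a i * C)) := by
            field_simp; ring_nf; exact (mul_inv_cancel₀ (ne_of_gt hApos)).symm
          rw [heq, Real.log_div (ne_of_gt hACpos) (ne_of_gt ht)]
        have h2 : a i * Real.log ((c i * A) / (a i * C)) ≤ c i * (A / C) - a i := by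
          have h3 := mul_le_mul_of_nonneg_left hlog (le_of_lt hai)
          have heq : a i * ((c i * A) / (a i * C) - 1) = c i * (A / C) - a i := by
            field_simp
          linarith
        rw [hsplit, mul_sub]
        linarith
    calc A * Real.log (A / C) = ∑ i ∈ s, (a i * Real.log (A / C) + (a i - c i * (A / C))) := by
          rw [Finset.sum_add_distrib, ← Finset.sum_mul, Finset.sum_sub_distrib, ← Finset.sum_mul]
          have : C * (A / C) = A := by field_simp
          rw [← hA, ← hC]
          nlinarith [this]
      _ ≤ ∑ i ∈ s, a i * Real.log (a i / c i) := Finset.sum_le_sum key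

section PrLemmas

variable {Ω : Type*} [Fintype Ω] (μ : Ω → ℝ)

lemma pr_nonneg (hμ : ∀ ω, 0 ≤ μ ω) (E : Ω → Prop) : 0 ≤ pr μ E :=
  Finset.sum_nonneg fun ω _ => by by_cases h : E ω <;> simp [pr, h, hμ ω]

lemma pr_congr {E F : Ω → Prop} (h : ∀ ω, E ω ↔ F ω) : pr μ E = pr μ F :=
  Finset.sum_congr rfl fun ω _ => by rw [h ω]

lemma pr_mono (hμ : ∀ ω, 0 ≤ μ ω) {E F : Ω → Prop} (h : ∀ ω, E ω → F ω) :
    pr μ E ≤ pr μ F := by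
  apply Finset.sum_le_sum
  intro ω _
  by_cases hE : E ω
  · simp [hE, h ω hE]
  · by_cases hF : F ω <;> simp [hE, hF, hμ ω]

lemma pr_true (hsum : ∑ ω, μ ω = 1) : pr μ (fun _ => True) = 1 := by
  simpa [pr] using hsum

lemma pr_of_not {E : Ω → Prop} (h : ∀ ω, ¬ E ω) : pr μ E = 0 :=
  Finset.sum_eq_zero fun ω _ => by simp [h ω]

lemma pr_bool_split (X : Ω → Bool) (E : Ω → Prop) :
    pr μ (fun ω => X ω = true ∧ E ω) + pr μ (fun ω => X ω = false ∧ E ω) = pr μ E := by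
  unfold pr
  rw [← Finset.sum_add_distrib]
  refine Finset.sum_congr rfl fun ω _ => ?_
  by_cases hE : E ω <;> cases h : X ω <;> simp [h, hE]

lemma sum_fiber (Z : Ω → ℝ) (E : Ω → Prop) (g : ℝ → ℝ) :
    ∑ z ∈ Finset.univ.image Z, g z * pr μ (fun ω => E ω ∧ Z ω = z)
      = ∑ ω, if E ω then g (Z ω) * μ ω else 0 := by
  unfold pr
  simp_rw [Finset.mul_sum]
  rw [Finset.sum_comm]
  refine Finset.sum_congr rfl fun ω _ => ?_
  by_cases hE : E ω
  · rw [Finset.sum_eq_single_of_mem (Z ω) (Finset.mem_image_of_mem Z (Finset.mem_univ ω))]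
    · simp [hE]
    · intro z _ hz
      simp [Ne.symm hz]
  · simp [hE]

lemma pr_fiber_split (Z : Ω → ℝ) (E : Ω → Prop) :
    ∑ z ∈ Finset.univ.image Z, pr μ (fun ω => E ω ∧ Z ω = z) = pr μ E := by
  have := sum_fiber μ Z E (fun _ => 1)
  simpa [pr] using this

lemma mutInfo_boolfst {γ : Type*} (B : Ω → Bool) (Y : Ω → γ) :
    mutInfo μ B Y = ∑ b : Bool, ∑ y ∈ Finset.univ.image Y,
      pr μ (fun ω => B ω = b ∧ Y ω = y) *
        Real.log (pr μ (fun ω => B ω = b ∧ Y ω = y) /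
          (pr μ (fun ω => B ω = b) * pr μ (fun ω => Y ω = y))) := by
  unfold mutInfo
  refine Finset.sum_subset (Finset.subset_univ _) ?_
  intro b _ hb
  refine Finset.sum_eq_zero fun y _ => ?_
  have h0 : pr μ (fun ω => B ω = b ∧ Y ω = y) = 0 :=
    pr_of_not μ fun ω h => hb ((@Finset.mem_image _ _ (fun a b => Classical.propDecidable (a = b)) B Finset.univ b).mpr ⟨ω, Finset.mem_univ ω, h.1⟩)
  rw [h0]; simp

lemma mutInfo_bool_bool (B Zt : Ω → Bool) :
    mutInfo μ B Zt = ∑ b : Bool, ∑ t : Bool,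
      pr μ (fun ω => B ω = b ∧ Zt ω = t) *
        Real.log (pr μ (fun ω => B ω = b ∧ Zt ω = t) /
          (pr μ (fun ω => B ω = b) * pr μ (fun ω => Zt ω = t))) := by
  rw [mutInfo_boolfst]
  refine Finset.sum_congr rfl fun b _ => ?_
  refine Finset.sum_subset (Finset.subset_univ _) fun t _ ht => ?_
  have h0 : pr μ (fun ω => B ω = b ∧ Zt ω = t) = 0 :=
    pr_of_not μ fun ω h => ht ((@Finset.mem_image _ _ (fun a b => Classical.propDecidable (a = b)) Zt Finset.univ t).mpr ⟨ω, Finset.mem_univ ω, h.2⟩)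
  rw [h0]; simp

end PrLemmas

lemma dpi_core (T : Finset ℝ) (p : ℝ → ℝ) (f : Bool → ℝ → ℝ)
    (hT : ∀ z ∈ T, z ∈ Set.Icc (0:ℝ) 1)
    (hf : ∀ (b : Bool), ∀ z ∈ T, 0 ≤ f b z)
    (hfp : ∀ z ∈ T, f true z + f false z = p z) :
    ∑ b : Bool, ∑ t : Bool,
        (∑ z ∈ T, (if t then z else 1 - z) * f b z) *
          Real.log ((∑ z ∈ T, (if t then z else 1 - z) * f b z) /
            ((∑ z' ∈ T, f b z') * (∑ z ∈ T, (if t then z else 1 - z) * p z)))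
      ≤ ∑ b : Bool, ∑ z ∈ T,
          f b z * Real.log (f b z / ((∑ z' ∈ T, f b z') * p z)) := by
  have hp : ∀ z ∈ T, 0 ≤ p z := fun z hz => by
    rw [← hfp z hz]; have := hf true z hz; have := hf false z hz; linarith
  have hK : ∀ (t : Bool), ∀ z ∈ T, 0 ≤ (if t then z else 1 - z) := by
    intro t z hz
    have h1 := (hT z hz).1; have h2 := (hT z hz).2
    cases t <;> simp <;> linarith
  refine Finset.sum_le_sum fun b _ => ?_
  have hF : 0 ≤ ∑ z' ∈ T, f b z' := Finset.sum_nonneg (hf b)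
  have hfF : ∀ z ∈ T, f b z ≤ ∑ z' ∈ T, f b z' :=
    fun z hz => Finset.single_le_sum (hf b) hz
  have hfpz : ∀ z ∈ T, f b z ≤ p z := by
    intro z hz
    have := hfp z hz
    have h1 := hf true z hz; have h2 := hf false z hz
    cases b <;> linarith
  calc ∑ t : Bool,
        (∑ z ∈ T, (if t then z else 1 - z) * f b z) *
          Real.log ((∑ z ∈ T, (if t then z else 1 - z) * f b z) /
            ((∑ z' ∈ T, f b z') * (∑ z ∈ T, (if t then z else 1 - z) * p z)))
      ≤ ∑ t : Bool, ∑ z ∈ T, ((if t then z else 1 - z) * f b z) *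
          Real.log (((if t then z else 1 - z) * f b z) /
            ((if t then z else 1 - z) * ((∑ z' ∈ T, f b z') * p z))) := by
        refine Finset.sum_le_sum fun t _ => ?_
        have hden : (∑ z' ∈ T, f b z') * (∑ z ∈ T, (if t then z else 1 - z) * p z)
            = ∑ z ∈ T, (if t then z else 1 - z) * ((∑ z' ∈ T, f b z') * p z) := by
          rw [Finset.mul_sum]
          exact Finset.sum_congr rfl fun z _ => by ring
        rw [hden]
        refine logSum T _ _ ?_ ?_ ?_
        · intro z hz; exact mul_nonneg (hK t z hz) (hf b z hz)
        · intro z hz; exact mul_nonneg (hK t z hz) (mul_nonneg hF (hp z hz))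
        · intro z hz h
          rcases mul_eq_zero.mp h with h | h
          · rw [h, zero_mul]
          · rcases mul_eq_zero.mp h with h | h
            · have h1 := hfF z hz; have h2 := hf b z hz
              have : f b z = 0 := le_antisymm (h ▸ h1) h2
              rw [this, mul_zero]
            · have h1 := hfpz z hz; have h2 := hf b z hz
              have : f b z = 0 := le_antisymm (h ▸ h1) h2
              rw [this, mul_zero]
    _ = ∑ z ∈ T, f b z * Real.log (f b z / ((∑ z' ∈ T, f b z') * p z)) := by
        rw [Finset.sum_comm]
        refine Finset.sum_congr rfl fun z hz => ?_
        have key : ∀ t : Bool, ((if t then z else 1 - z) * f b z) *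
            Real.log (((if t then z else 1 - z) * f b z) /
              ((if t then z else 1 - z) * ((∑ z' ∈ T, f b z') * p z)))
            = (if t then z else 1 - z) *
              (f b z * Real.log (f b z / ((∑ z' ∈ T, f b z') * p z))) := by
          intro t
          rcases eq_or_ne (if t then z else (1:ℝ) - z) 0 with h | h
          · rw [h]; ring
          · rw [mul_div_mul_left _ _ h]; ring
        rw [Fintype.sum_bool, key true, key false]
        norm_num
        ring

/-- Core of Lemma 2: `q² KL(s,r) ≤ q I(B; Z̃) ≤ q I(B; Z)`, where `Z̃` is a
Bernoulli randomization of `Z` drawn independently of `B` given `Z`. -/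
theorem kl_le_mutInfo {Ω : Type*} [Fintype Ω]
    (μ : Ω → ℝ) (hμ : ∀ ω, 0 ≤ μ ω) (hsum : ∑ ω, μ ω = 1)
    (B Zt : Ω → Bool) (Z : Ω → ℝ) (hZ : ∀ ω, Z ω ∈ Set.Icc (0:ℝ) 1)
    (q r s : ℝ)
    (hq : pr μ (fun ω => B ω = true) = q)
    (hr : ∑ ω, μ ω * Z ω = r) (hr' : r ∈ Set.Ioo (0:ℝ) 1)
    (hs : ∑ ω, (if B ω = true then μ ω * Z ω else 0) = s * q)
    -- `Z̃` is Bernoulli with conditional success probability `Z`: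
    (hZt : ∀ z : ℝ, pr μ (fun ω => Zt ω = true ∧ Z ω = z) = z * pr μ (fun ω => Z ω = z))
    -- `Z̃` is conditionally independent of `B` given `Z`:
    (hind : ∀ (z : ℝ) (bt bv : Bool),
      pr μ (fun ω => Zt ω = bt ∧ B ω = bv ∧ Z ω = z) * pr μ (fun ω => Z ω = z)
        = pr μ (fun ω => Zt ω = bt ∧ Z ω = z) * pr μ (fun ω => B ω = bv ∧ Z ω = z)) :
    q ^ 2 * klBer s r ≤ q * mutInfo μ B Zt ∧
      q * mutInfo μ B Zt ≤ q * mutInfo μ B Z := by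
  have hq0 : 0 ≤ q := hq ▸ pr_nonneg μ hμ _
  have hTmem : ∀ z ∈ Finset.univ.image Z, z ∈ Set.Icc (0:ℝ) 1 := by
    intro z hz
    obtain ⟨ω, _, rfl⟩ := Finset.mem_image.mp hz
    exact hZ ω
  -- conditional distribution of Z̃ given Z
  have hTZ : ∀ (t : Bool) (z : ℝ), pr μ (fun ω => Zt ω = t ∧ Z ω = z)
      = (if t then z else 1 - z) * pr μ (fun ω => Z ω = z) := by
    intro t z
    cases t with
    | false =>
        simp only [Bool.false_eq_true, if_false]
        linear_combination (pr_bool_split μ Zt (fun ω => Z ω = z)) - hZt z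
    | true =>
        simpa using hZt z
  -- conditional independence gives the kernel form
  have hTBZ : ∀ (t b : Bool) (z : ℝ), pr μ (fun ω => Zt ω = t ∧ B ω = b ∧ Z ω = z)
      = (if t then z else 1 - z) * pr μ (fun ω => B ω = b ∧ Z ω = z) := by
    intro t b z
    rcases eq_or_ne (pr μ (fun ω => Z ω = z)) 0 with h | h
    · have h1 : pr μ (fun ω => Zt ω = t ∧ B ω = b ∧ Z ω = z) = 0 :=
        le_antisymm (h ▸ pr_mono μ hμ fun ω hw => hw.2.2) (pr_nonneg μ hμ _)
      have h2 : pr μ (fun ω => B ω = b ∧ Z ω = z) = 0 :=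
        le_antisymm (h ▸ pr_mono μ hμ fun ω hw => hw.2) (pr_nonneg μ hμ _)
      rw [h1, h2, mul_zero]
    · have hh := hind z t b
      rw [hTZ t z] at hh
      apply mul_right_cancel₀ h
      rw [hh]; ring
  have hBT : ∀ (b t : Bool), pr μ (fun ω => B ω = b ∧ Zt ω = t)
      = ∑ z ∈ Finset.univ.image Z, (if t then z else 1 - z) * pr μ (fun ω => B ω = b ∧ Z ω = z) := by
    intro b t
    rw [← pr_fiber_split μ Z (fun ω => B ω = b ∧ Zt ω = t)]
    refine Finset.sum_congr rfl fun z _ => ?_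
    rw [← hTBZ t b z]
    exact pr_congr μ fun ω => by tauto
  have hB : ∀ b : Bool, pr μ (fun ω => B ω = b)
      = ∑ z ∈ Finset.univ.image Z, pr μ (fun ω => B ω = b ∧ Z ω = z) :=
    fun b => (pr_fiber_split μ Z _).symm
  have hTt : ∀ t : Bool, pr μ (fun ω => Zt ω = t)
      = ∑ z ∈ Finset.univ.image Z, (if t then z else 1 - z) * pr μ (fun ω => Z ω = z) := by
    intro t
    rw [← pr_fiber_split μ Z (fun ω => Zt ω = t)]
    exact Finset.sum_congr rfl fun z _ => hTZ t z
  -- data processing inequality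
  have hI2 : mutInfo μ B Zt ≤ mutInfo μ B Z := by
    have e1 : mutInfo μ B Zt = ∑ b : Bool, ∑ t : Bool,
        (∑ z ∈ Finset.univ.image Z, (if t then z else 1 - z) * pr μ (fun ω => B ω = b ∧ Z ω = z)) *
          Real.log ((∑ z ∈ Finset.univ.image Z, (if t then z else 1 - z) * pr μ (fun ω => B ω = b ∧ Z ω = z)) /
            ((∑ z' ∈ Finset.univ.image Z, pr μ (fun ω => B ω = b ∧ Z ω = z')) *
              (∑ z ∈ Finset.univ.image Z, (if t then z else 1 - z) * pr μ (fun ω => Z ω = z)))) := by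
      rw [mutInfo_bool_bool]
      refine Finset.sum_congr rfl fun b _ => Finset.sum_congr rfl fun t _ => ?_
      rw [hBT b t, hB b, hTt t]
    have e2 : mutInfo μ B Z = ∑ b : Bool, ∑ z ∈ Finset.univ.image Z,
        pr μ (fun ω => B ω = b ∧ Z ω = z) *
          Real.log (pr μ (fun ω => B ω = b ∧ Z ω = z) /
            ((∑ z' ∈ Finset.univ.image Z, pr μ (fun ω => B ω = b ∧ Z ω = z')) *
              pr μ (fun ω => Z ω = z))) := by
      rw [mutInfo_boolfst]
      refine Finset.sum_congr rfl fun b _ => Finset.sum_congr rfl fun z _ => ?_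
      rw [hB b]
    rw [e1, e2]
    exact dpi_core (Finset.univ.image Z) (fun z => pr μ (fun ω => Z ω = z))
      (fun b z => pr μ (fun ω => B ω = b ∧ Z ω = z)) hTmem
      (fun b z hz => pr_nonneg μ hμ _) (fun z hz => pr_bool_split μ B _)
  refine ⟨?_, mul_le_mul_of_nonneg_left hI2 hq0⟩
  -- part 1
  rcases eq_or_lt_of_le hq0 with h | hqpos
  · rw [← h]; simp
  -- key marginal values
  have hA1 : pr μ (fun ω => B ω = true ∧ Zt ω = true) = s * q := by
    rw [hBT true true, ← hs]
    have e0 : ∑ z ∈ Finset.univ.image Z,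
        (if (true : Bool) then z else 1 - z) * pr μ (fun ω => B ω = true ∧ Z ω = z)
        = ∑ z ∈ Finset.univ.image Z, z * pr μ (fun ω => B ω = true ∧ Z ω = z) :=
      Finset.sum_congr rfl fun z _ => by norm_num
    refine e0.trans ((sum_fiber μ Z (fun ω => B ω = true) (fun z => z)).trans ?_)
    refine Finset.sum_congr rfl fun ω _ => ?_
    by_cases h : B ω = true <;> simp [h, mul_comm]
  have hr2 : pr μ (fun ω => Zt ω = true) = r := by
    rw [hTt true, ← hr]
    have h1 : ∀ z ∈ Finset.univ.image Z,
        (if (true : Bool) then z else 1 - z) * pr μ (fun ω => Z ω = z)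
          = z * pr μ (fun ω => True ∧ Z ω = z) := by
      intro z _
      have e : pr μ (fun ω => True ∧ Z ω = z) = pr μ (fun ω => Z ω = z) :=
        pr_congr μ fun ω => by tauto
      rw [e]; norm_num
    refine (Finset.sum_congr rfl h1).trans
      ((sum_fiber μ Z (fun _ => True) (fun z => z)).trans ?_)
    refine Finset.sum_congr rfl fun ω _ => by simp [mul_comm]
  have hT1 : pr μ (fun ω => Zt ω = true) + pr μ (fun ω => Zt ω = false) = 1 := by
    have e : ∀ t, pr μ (fun ω => Zt ω = t ∧ True) = pr μ (fun ω => Zt ω = t) :=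
      fun t => pr_congr μ (fun ω => by tauto)
    have h := pr_bool_split μ Zt (fun _ => True)
    rw [pr_true μ hsum, e true, e false] at h
    exact h
  have hr3 : pr μ (fun ω => Zt ω = false) = 1 - r := by
    rw [hr2] at hT1; linarith
  have hA2 : pr μ (fun ω => B ω = true ∧ Zt ω = false) = q - s * q := by
    have h := pr_bool_split μ Zt (fun ω => B ω = true)
    rw [hq] at h
    have e1 : pr μ (fun ω => Zt ω = true ∧ B ω = true)
        = pr μ (fun ω => B ω = true ∧ Zt ω = true) := pr_congr μ fun ω => by tauto
    have e2 : pr μ (fun ω => Zt ω = false ∧ B ω = true)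
        = pr μ (fun ω => B ω = true ∧ Zt ω = false) := pr_congr μ fun ω => by tauto
    rw [e1, e2, hA1] at h
    linarith
  -- lower bound for the mutual information
  have hIlow : q * klBer s r ≤ mutInfo μ B Zt := by
    rw [mutInfo_bool_bool μ B Zt, Fintype.sum_bool]
    have htrue : ∑ t : Bool, pr μ (fun ω => B ω = true ∧ Zt ω = t) *
        Real.log (pr μ (fun ω => B ω = true ∧ Zt ω = t) /
          (pr μ (fun ω => B ω = true) * pr μ (fun ω => Zt ω = t)))
        = q * klBer s r := by
      rw [Fintype.sum_bool, hA1, hA2, hq, hr2, hr3]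
      have e1 : s * q / (q * r) = s / r := by
        rw [mul_comm s q]; exact mul_div_mul_left s r (ne_of_gt hqpos)
      have e2 : q - s * q = q * (1 - s) := by ring
      have e3 : q * (1 - s) / (q * (1 - r)) = (1 - s) / (1 - r) :=
        mul_div_mul_left _ _ (ne_of_gt hqpos)
      rw [e1, e2, e3, klBer]
      ring
    have hfalse : 0 ≤ ∑ t : Bool, pr μ (fun ω => B ω = false ∧ Zt ω = t) *
        Real.log (pr μ (fun ω => B ω = false ∧ Zt ω = t) /
          (pr μ (fun ω => B ω = false) * pr μ (fun ω => Zt ω = t))) := by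
      have hsa : ∑ t : Bool, pr μ (fun ω => B ω = false ∧ Zt ω = t)
          = pr μ (fun ω => B ω = false) := by
        rw [Fintype.sum_bool]
        have h := pr_bool_split μ Zt (fun ω => B ω = false)
        have e1 : pr μ (fun ω => Zt ω = true ∧ B ω = false)
            = pr μ (fun ω => B ω = false ∧ Zt ω = true) := pr_congr μ fun ω => by tauto
        have e2 : pr μ (fun ω => Zt ω = false ∧ B ω = false)
            = pr μ (fun ω => B ω = false ∧ Zt ω = false) := pr_congr μ fun ω => by tauto
        rw [e1, e2] at h
        exact h
      have hsc : ∑ t : Bool, pr μ (fun ω => B ω = false) * pr μ (fun ω => Zt ω = t)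
          = pr μ (fun ω => B ω = false) := by
        rw [Fintype.sum_bool, ← mul_add, hT1, mul_one]
      have hls := logSum Finset.univ (fun t : Bool => pr μ (fun ω => B ω = false ∧ Zt ω = t))
        (fun t : Bool => pr μ (fun ω => B ω = false) * pr μ (fun ω => Zt ω = t))
        (fun t _ => pr_nonneg μ hμ _)
        (fun t _ => mul_nonneg (pr_nonneg μ hμ _) (pr_nonneg μ hμ _))
        (fun t _ h => by
          rcases mul_eq_zero.mp h with h | h
          · exact le_antisymm (h ▸ pr_mono μ hμ fun ω hw => hw.1) (pr_nonneg μ hμ _)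
          · exact le_antisymm (h ▸ pr_mono μ hμ fun ω hw => hw.2) (pr_nonneg μ hμ _))
      rw [hsa, hsc] at hls
      have hz : pr μ (fun ω => B ω = false) *
          Real.log (pr μ (fun ω => B ω = false) / pr μ (fun ω => B ω = false)) = 0 := by
        rcases eq_or_ne (pr μ (fun ω => B ω = false)) 0 with h | h
        · rw [h, zero_mul]
        · rw [div_self h, Real.log_one, mul_zero]
      rw [hz] at hls
      exact hls
    rw [htrue]
    linarith
  calc q ^ 2 * klBer s r = q * (q * klBer s r) := by ring
    _ ≤ q * mutInfo μ B Zt := mul_le_mul_of_nonneg_left hIlow hq0
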